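/- Let G1 and G2 be finite simple graphs that are indistinguishable by 3-WL. Then for every K ≥ 1, every L ≥ 1, every kernel t ∈ {spd, gd}, and every K-hop message passing GNN with L layers (arbitrary message, update, combine and readout functions, constant initial node features), the graph representations satisfy h_{G1} = h_{G2}. In other words, the expressive power of K-hop message passing with either kernel is bounded by the 3-WL test. -/

import Mathlib

/-!
STATEMENT 1: If two finite simple graphs are indistinguishable by the 3-WL test, then
for every K ≥ 1, every L ≥ 1, either kernel (spd or gd) and every K-hop message passing
GNN with L layers (arbitrary message/update/combine/readout functions, constant initial
node features) the two graph representations coincide: the expressive power of K-hop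
message passing is bounded by 3-WL.
-/

namespace KHopStmt1

/-- The two kernels of K-hop neighbors. -/
inductive Kernel
  | spd
  | gd

/-- k-th hop neighbors under the shortest-path-distance kernel: vertices at graph
distance exactly `k` from `v`. -/
noncomputable def Qspd {V : Type*} [Fintype V] (G : SimpleGraph V) (v : V) (k : ℕ) :
    Finset V := by
  classical
  exact Finset.univ.filter fun u => G.Reachable v u ∧ G.dist v u = k

/-- k-th hop neighbors under the graph-diffusion kernel: vertices `u ≠ v` admitting a
walk of length exactly `k` from `v` to `u` (and `{v}` itself for `k = 0`). -/
noncomputable def Qgd {V : Type*} [Fintype V] (G : SimpleGraph V) (v : V) (k : ℕ) :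
    Finset V := by
  classical
  exact if k = 0 then {v}
    else Finset.univ.filter fun u => u ≠ v ∧ ∃ w : G.Walk v u, w.length = k

/-- k-th hop neighbors under kernel `t`. -/
noncomputable def Qhop {V : Type*} [Fintype V] (t : Kernel) (G : SimpleGraph V) (v : V)
    (k : ℕ) : Finset V :=
  match t with
  | .spd => Qspd G v k
  | .gd => Qgd G v k

/-- Node features computed by a K-hop message passing GNN with kernel `t`:
`h^0_v = h0` (constant initial features), and for each layer
`m^{l,k}_v = MES l k {{h^{l-1}_u : u ∈ Q^{k,t}_v}}`, `h^{l,k}_v = UPD l k m^{l,k}_v h^{l-1}_v`,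
`h^l_v = COMBINE l {{h^{l,k}_v : k = 1,…,K}}`. -/
noncomputable def gnnFeat {V : Type*} [Fintype V] (t : Kernel) (K : ℕ)
    {H M : Type} (h0 : H) (MES : ℕ → ℕ → Multiset H → M)
    (UPD : ℕ → ℕ → M → H → H) (COMB : ℕ → Multiset H → H)
    (G : SimpleGraph V) : ℕ → V → H
  | 0, _ => h0
  | (l + 1), v =>
      COMB (l + 1)
        (((List.range K).map fun k =>
            UPD (l + 1) (k + 1)
              (MES (l + 1) (k + 1)
                ((Qhop t G v (k + 1)).val.map (gnnFeat t K h0 MES UPD COMB G l)))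
              (gnnFeat t K h0 MES UPD COMB G l v) : List H) : Multiset H)

/-- Graph representation: `h_G = READOUT {{h^L_v : v ∈ V}}`. -/
noncomputable def gnnGraphRep {V : Type*} [Fintype V] (t : Kernel) (K : ℕ)
    {H M B : Type} (h0 : H) (MES : ℕ → ℕ → Multiset H → M)
    (UPD : ℕ → ℕ → M → H → H) (COMB : ℕ → Multiset H → H)
    (READOUT : Multiset H → B) (G : SimpleGraph V) (L : ℕ) : B :=
  READOUT (Finset.univ.val.map (gnnFeat t K h0 MES UPD COMB G L))

/-- 3-WL color refinement, expressed as a relation comparing the iteration-`l` colors of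
a triple of vertices of `G1` with those of a triple of vertices of `G2`. The initial
color records which entries of the triple are equal and which pairs are adjacent; one
refinement step additionally compares, for each coordinate `j`, the multisets of colors
obtained by replacing the j-th entry by an arbitrary vertex (multiset equality being
expressed by the existence of a color-preserving bijection of the vertex sets). -/
def TWLEquiv {V1 V2 : Type*} (G1 : SimpleGraph V1) (G2 : SimpleGraph V2) :
    ℕ → (Fin 3 → V1) → (Fin 3 → V2) → Prop
  | 0, w1, w2 => ∀ i j : Fin 3,
      (w1 i = w1 j ↔ w2 i = w2 j) ∧ (G1.Adj (w1 i) (w1 j) ↔ G2.Adj (w2 i) (w2 j))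
  | (l + 1), w1, w2 => TWLEquiv G1 G2 l w1 w2 ∧
      ∀ j : Fin 3, ∃ σ : V1 ≃ V2, ∀ u : V1,
        TWLEquiv G1 G2 l (Function.update w1 j u) (Function.update w2 j (σ u))

/-- Two graphs are indistinguishable by 3-WL if for every iteration the multisets of
colors of all triples coincide, i.e. there is a color-preserving bijection of triples. -/
def TWLIndistinguishable {V1 V2 : Type*} (G1 : SimpleGraph V1) (G2 : SimpleGraph V2) :
    Prop :=
  ∀ l : ℕ, ∃ σ : (Fin 3 → V1) ≃ (Fin 3 → V2), ∀ w, TWLEquiv G1 G2 l w (σ w)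

/-! ### Auxiliary machinery -/

/-- Existence of a walk of prescribed length. -/
def WalkLen {V : Type*} (G : SimpleGraph V) (a b : V) (k : ℕ) : Prop :=
  ∃ p : G.Walk a b, p.length = k

lemma walkLen_zero {V : Type*} (G : SimpleGraph V) (a b : V) :
    WalkLen G a b 0 ↔ a = b := SimpleGraph.Walk.exists_length_eq_zero_iff

lemma walkLen_succ {V : Type*} (G : SimpleGraph V) (a b : V) (k : ℕ) :
    WalkLen G a b (k + 1) ↔ ∃ x, G.Adj a x ∧ WalkLen G x b k := by
  constructor
  · rintro ⟨p, hp⟩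
    cases p with
    | nil => simp at hp
    | cons h q => exact ⟨_, h, q, by simpa using hp⟩
  · rintro ⟨x, hadj, q, hq⟩
    exact ⟨SimpleGraph.Walk.cons hadj q, by simp [hq]⟩

lemma mem_Qspd_iff {V : Type*} [Fintype V] (G : SimpleGraph V) (v u : V) (k : ℕ) :
    u ∈ Qspd G v k ↔ (WalkLen G v u k ∧ ∀ k' < k, ¬ WalkLen G v u k') := by
  classical
  simp only [Qspd, Finset.mem_filter, Finset.mem_univ, true_and]
  constructor
  · rintro ⟨hr, hd⟩
    refine ⟨hd ▸ hr.exists_walk_length_eq_dist, ?_⟩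
    rintro k' hk' ⟨p, hp⟩
    exact absurd (hp ▸ SimpleGraph.dist_le p) (by omega)
  · rintro ⟨⟨p, hp⟩, hmin⟩
    have hr : G.Reachable v u := ⟨p⟩
    have hle : G.dist v u ≤ k := hp ▸ SimpleGraph.dist_le p
    refine ⟨hr, ?_⟩
    by_contra hne
    have hlt : G.dist v u < k := lt_of_le_of_ne hle hne
    exact hmin _ hlt ⟨hr.exists_walk_length_eq_dist.choose,
      hr.exists_walk_length_eq_dist.choose_spec⟩

lemma mem_Qgd_iff {V : Type*} [Fintype V] (G : SimpleGraph V) (v u : V) (k : ℕ) :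
    u ∈ Qgd G v (k + 1) ↔ (u ≠ v ∧ WalkLen G v u (k + 1)) := by
  classical
  simp [Qgd, WalkLen]

lemma twl_succ {V1 V2 : Type*} {G1 : SimpleGraph V1} {G2 : SimpleGraph V2} {l : ℕ}
    {w1 : Fin 3 → V1} {w2 : Fin 3 → V2} (h : TWLEquiv G1 G2 (l + 1) w1 w2) :
    TWLEquiv G1 G2 l w1 w2 := h.1

lemma twl_mono {V1 V2 : Type*} {G1 : SimpleGraph V1} {G2 : SimpleGraph V2} {l l' : ℕ}
    (hl : l' ≤ l) {w1 : Fin 3 → V1} {w2 : Fin 3 → V2}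
    (h : TWLEquiv G1 G2 l w1 w2) : TWLEquiv G1 G2 l' w1 w2 := by
  induction l with
  | zero => exact (Nat.le_zero.mp hl) ▸ h
  | succ n ih =>
      rcases Nat.eq_or_lt_of_le hl with rfl | hlt
      · exact h
      · exact ih (Nat.lt_succ_iff.mp hlt) (twl_succ h)

/-- Walk existence between two coordinates of a triple is a 3-WL invariant. -/
lemma walkLen_iff {V1 V2 : Type*} {G1 : SimpleGraph V1} {G2 : SimpleGraph V2} :
    ∀ (k l : ℕ), k ≤ l → ∀ (w1 : Fin 3 → V1) (w2 : Fin 3 → V2),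
      TWLEquiv G1 G2 l w1 w2 → ∀ i j s : Fin 3, i ≠ j → s ≠ i → s ≠ j →
      (WalkLen G1 (w1 i) (w1 j) k ↔ WalkLen G2 (w2 i) (w2 j) k) := by
  intro k
  induction k with
  | zero =>
      intro l _ w1 w2 h i j _ _ _ _
      have h0 : TWLEquiv G1 G2 0 w1 w2 := twl_mono (Nat.zero_le l) h
      rw [walkLen_zero, walkLen_zero]
      exact (h0 i j).1
  | succ k ih =>
      intro l hkl w1 w2 h i j s hij hsi hsj
      obtain ⟨l', rfl⟩ : ∃ l', l = l' + 1 := ⟨l - 1, by omega⟩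
      obtain ⟨σ, hσ⟩ := h.2 s
      have hkl' : k ≤ l' := by omega
      rw [walkLen_succ, walkLen_succ]
      constructor
      · rintro ⟨x, hadj, hw⟩
        refine ⟨σ x, ?_, ?_⟩
        · have h0 : TWLEquiv G1 G2 0 (Function.update w1 s x)
              (Function.update w2 s (σ x)) := twl_mono (Nat.zero_le l') (hσ x)
          have := (h0 i s).2
          simp only [Function.update_of_ne hsi.symm, Function.update_self] at this
          exact this.mp hadj
        · have := ih l' hkl' _ _ (hσ x) s j i hsj hsi.symm hij
          simp only [Function.update_self, Function.update_of_ne hsj.symm] at this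
          exact this.mp hw
      · rintro ⟨y, hadj, hw⟩
        refine ⟨σ.symm y, ?_, ?_⟩
        · have h0 : TWLEquiv G1 G2 0 (Function.update w1 s (σ.symm y))
              (Function.update w2 s (σ (σ.symm y))) :=
            twl_mono (Nat.zero_le l') (hσ (σ.symm y))
          have := (h0 i s).2
          simp only [Function.update_of_ne hsi.symm, Function.update_self,
            Equiv.apply_symm_apply] at this
          exact this.mpr hadj
        · have := ih l' hkl' _ _ (hσ (σ.symm y)) s j i hsj hsi.symm hij
          simp only [Function.update_self, Function.update_of_ne hsj.symm,
            Equiv.apply_symm_apply] at this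
          exact this.mpr hw

/-- Membership in the k-hop neighborhood is transferred along the 3-WL refinement. -/
lemma mem_Qhop_iff_of_twl {V1 V2 : Type*} [Fintype V1] [Fintype V2]
    {G1 : SimpleGraph V1} {G2 : SimpleGraph V2} (t : Kernel) {l k : ℕ}
    (hkl : k + 1 ≤ l) {w1 : Fin 3 → V1} {w2 : Fin 3 → V2}
    (h : TWLEquiv G1 G2 l w1 w2) {j m i : Fin 3} (hjm : j ≠ m) (him : i ≠ m)
    (hij : i ≠ j) :
    (w1 m ∈ Qhop t G1 (w1 j) (k + 1) ↔ w2 m ∈ Qhop t G2 (w2 j) (k + 1)) := by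
  have hW : ∀ k' : ℕ, k' ≤ k + 1 →
      (WalkLen G1 (w1 j) (w1 m) k' ↔ WalkLen G2 (w2 j) (w2 m) k') := by
    intro k' hk'
    exact walkLen_iff k' l (le_trans hk' hkl) w1 w2 h j m i hjm hij him
  have h0 : TWLEquiv G1 G2 0 w1 w2 := twl_mono (Nat.zero_le l) h
  cases t with
  | spd =>
      show _ ∈ Qspd _ _ _ ↔ _ ∈ Qspd _ _ _
      rw [mem_Qspd_iff, mem_Qspd_iff]
      constructor
      · rintro ⟨hw, hmin⟩
        exact ⟨(hW _ le_rfl).mp hw, fun k' hk' hc =>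
          hmin k' hk' ((hW k' (by omega)).mpr hc)⟩
      · rintro ⟨hw, hmin⟩
        exact ⟨(hW _ le_rfl).mpr hw, fun k' hk' hc =>
          hmin k' hk' ((hW k' (by omega)).mp hc)⟩
  | gd =>
      show _ ∈ Qgd _ _ _ ↔ _ ∈ Qgd _ _ _
      rw [mem_Qgd_iff, mem_Qgd_iff]
      have heq : w1 m = w1 j ↔ w2 m = w2 j := (h0 m j).1
      exact and_congr (not_congr heq) (hW _ le_rfl)

/-- Key induction: GNN features at depth `d` are equal at matching coordinates of
3-WL-equivalent triples, provided the 3-WL iteration count is at least `d * (K + 1)`. -/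
lemma featEq {V1 V2 : Type*} [Fintype V1] [Fintype V2]
    {G1 : SimpleGraph V1} {G2 : SimpleGraph V2} (t : Kernel) (K : ℕ)
    {H M : Type} (h0 : H) (MES : ℕ → ℕ → Multiset H → M)
    (UPD : ℕ → ℕ → M → H → H) (COMB : ℕ → Multiset H → H) :
    ∀ (d l : ℕ), d * (K + 1) ≤ l → ∀ (w1 : Fin 3 → V1) (w2 : Fin 3 → V2),
      TWLEquiv G1 G2 l w1 w2 → ∀ j : Fin 3,
      gnnFeat t K h0 MES UPD COMB G1 d (w1 j) =
        gnnFeat t K h0 MES UPD COMB G2 d (w2 j) := by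
  intro d
  induction d with
  | zero => intro l _ w1 w2 _ j; rfl
  | succ d ih =>
      intro l hdl w1 w2 h j
      have hpos : 1 ≤ l := le_trans
        (Nat.one_le_iff_ne_zero.mpr (Nat.mul_ne_zero (Nat.succ_ne_zero d) (Nat.succ_ne_zero K))) hdl
      obtain ⟨l', rfl⟩ : ∃ l', l = l' + 1 := ⟨l - 1, by omega⟩
      rw [Nat.succ_mul] at hdl
      have hl'K : K ≤ l' := by omega
      have hl'd : d * (K + 1) ≤ l' := by omega
      -- the two indices other than j
      have hidx : ∀ j : Fin 3, j + 1 ≠ j ∧ j + 2 ≠ j ∧ j + 2 ≠ j + 1 := by decide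
      set m : Fin 3 := j + 1 with hm
      set i : Fin 3 := j + 2 with hi
      obtain ⟨hmj, hijx, him⟩ := hidx j
      obtain ⟨σ, hσ⟩ := h.2 m
      -- equality of previous-layer features at the base vertex
      have hbase : gnnFeat t K h0 MES UPD COMB G1 d (w1 j) =
          gnnFeat t K h0 MES UPD COMB G2 d (w2 j) :=
        ih l' hl'd w1 w2 (twl_succ h) j
      -- for every u, the previous-layer features at u and σ u agree
      have hfeat : ∀ u : V1, gnnFeat t K h0 MES UPD COMB G1 d u =
          gnnFeat t K h0 MES UPD COMB G2 d (σ u) := by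
        intro u
        have := ih l' hl'd _ _ (hσ u) m
        simpa using this
      -- the k-hop neighborhoods correspond under σ
      have hQ : ∀ k : ℕ, k + 1 ≤ K → ∀ u : V1,
          (u ∈ Qhop t G1 (w1 j) (k + 1) ↔ σ u ∈ Qhop t G2 (w2 j) (k + 1)) := by
        intro k hk u
        have := mem_Qhop_iff_of_twl t (l := l') (k := k) (by omega) (hσ u)
          (j := j) (m := m) (i := i) hmj.symm him hijx
        simpa [Function.update_of_ne (show j ≠ m from hmj.symm), Function.update_of_ne hijx.symm,
          Function.update_self] using this
      have hQmap : ∀ k : ℕ, k + 1 ≤ K →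
          Qhop t G2 (w2 j) (k + 1) = (Qhop t G1 (w1 j) (k + 1)).map σ.toEmbedding := by
        intro k hk
        ext y
        simp only [Finset.mem_map, Equiv.coe_toEmbedding]
        constructor
        · intro hy
          exact ⟨σ.symm y, (hQ k hk _).mpr (by simpa using hy), by simp⟩
        · rintro ⟨u, hu, rfl⟩
          exact (hQ k hk u).mp hu
      have hmul : ∀ k, k < K →
          Multiset.map (gnnFeat t K h0 MES UPD COMB G1 d) (Qhop t G1 (w1 j) (k+1)).val =
          Multiset.map (gnnFeat t K h0 MES UPD COMB G2 d) (Qhop t G2 (w2 j) (k+1)).val := by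
        intro k hk
        rw [hQmap k hk, Finset.map_val, Multiset.map_map]
        exact Multiset.map_congr rfl fun u _ => hfeat u
      show COMB _ _ = COMB _ _
      congr 1
      congr 1
      apply List.map_congr_left
      intro k hk
      rw [List.mem_range] at hk
      rw [hmul k hk, hbase]

/-- The expressive power of K-hop message passing (with either kernel)
is bounded by the 3-WL test: 3-WL-indistinguishable graphs receive equal graph
representations from every K-hop message passing GNN on constant initial features. -/
theorem khop_bounded_by_3WL {V1 V2 : Type*} [Fintype V1] [Fintype V2]
    (G1 : SimpleGraph V1) (G2 : SimpleGraph V2)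
    (hindist : TWLIndistinguishable G1 G2)
    (K L : ℕ) (hK : 1 ≤ K) (hL : 1 ≤ L) (t : Kernel)
    {H M B : Type} (h0 : H) (MES : ℕ → ℕ → Multiset H → M)
    (UPD : ℕ → ℕ → M → H → H) (COMB : ℕ → Multiset H → H)
    (READOUT : Multiset H → B) :
    gnnGraphRep t K h0 MES UPD COMB READOUT G1 L =
      gnnGraphRep t K h0 MES UPD COMB READOUT G2 L := by
  classical
  unfold gnnGraphRep
  congr 1
  by_cases hne : Nonempty V1
  · obtain ⟨v0⟩ := hne
    obtain ⟨σT, hσT⟩ := hindist (L * (K + 1) + 1)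
    set w1 : Fin 3 → V1 := fun _ => v0
    have h := hσT w1
    obtain ⟨σ, hσ⟩ := h.2 0
    have hfeat : ∀ u : V1, gnnFeat t K h0 MES UPD COMB G1 L u =
        gnnFeat t K h0 MES UPD COMB G2 L (σ u) := by
      intro u
      have := featEq t K h0 MES UPD COMB L (L * (K + 1)) le_rfl _ _ (hσ u) 0
      simpa using this
    have : (Finset.univ : Finset V2) = Finset.univ.map σ.toEmbedding :=
      (Finset.map_univ_equiv σ).symm
    rw [this, Finset.map_val, Multiset.map_map]
    exact Multiset.map_congr rfl fun u _ => hfeat u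
  · have hE1 : IsEmpty V1 := not_nonempty_iff.mp hne
    have hE2 : IsEmpty V2 := by
      by_contra hc
      obtain ⟨v⟩ := not_isEmpty_iff.mp hc
      obtain ⟨σT, _⟩ := hindist 0
      exact hE1.elim (σT.symm (fun _ => v) 0)
    simp [Finset.univ_eq_empty]

end KHopStmt1
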